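/- Let f₁, …, f_n, g₁, …, g_n ∈ L^∞(∂D) and suppose Σ_{i=1}^n H_{f_i}* H_{g_i} = 0 as an operator on H². Then there exist an n × n complex matrix A with entries of modulus ≤ 1 and a permutation matrix R such that all entries of (R − A)(f₁, …, f_n)ᵀ and of A*(g₁, …, g_n)ᵀ belong to H^∞. -/

import Mathlib

noncomputable section
open MeasureTheory Complex
open scoped InnerProductSpace ComplexConjugate

set_option synthInstance.maxHeartbeats 400000

namespace HardySpace

instance fact_two_pi_pos : Fact (0 < 2 * Real.pi) := ⟨by positivity⟩
abbrev 𝕋 : Type := AddCircle (2 * Real.pi)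
abbrev μT : Measure 𝕋 := AddCircle.haarAddCircle
abbrev L2 : Type := Lp ℂ 2 μT
def cw : 𝕋 → ℂ := fun x => fourier 1 x
def Hardy : Submodule ℂ L2 :=
  (Submodule.span ℂ (Set.range fun n : ℕ => (fourierLp 2 (n : ℤ) : L2))).topologicalClosure
instance : CompleteSpace Hardy :=
  (Submodule.isClosed_topologicalClosure _).completeSpace_coe
def Pfull : L2 →L[ℂ] L2 := Hardy.subtypeL.comp (Submodule.orthogonalProjectionOnto Hardy)

open Classical in
/-- The element of `L²` determined by an essentially bounded symbol
(junk value `0` if the function is not essentially bounded). -/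
def symbolL2 (g : 𝕋 → ℂ) : L2 :=
  if hg : MemLp g ⊤ μT then (hg.mono_exponent le_top).toLp g else 0

/-- `g ∈ H^∞`: `g` is essentially bounded and lies in the Hardy space. -/
def InHinf (g : 𝕋 → ℂ) : Prop := MemLp g ⊤ μT ∧ symbolL2 g ∈ Hardy

theorem memMul {f : 𝕋 → ℂ} (hf : MemLp f ⊤ μT) (h : L2) :
    MemLp (fun x => f x * h x) 2 μT := by
  refine ⟨hf.aestronglyMeasurable.mul (Lp.aestronglyMeasurable h), ?_⟩
  have key := eLpNorm_le_eLpNorm_top_mul_eLpNorm 2 f (Lp.aestronglyMeasurable h)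
    (· * ·) 1 (Filter.Eventually.of_forall fun x => by simp [nnnorm_mul])
  rw [ENNReal.coe_one, one_mul] at key
  refine lt_of_le_of_lt key ?_
  exact ENNReal.mul_lt_top hf.2 (Lp.memLp h).2

open Classical in
/-- Multiplication by an `L^∞` symbol, as a bounded operator on `L²`
(defined to be `0` for symbols that are not essentially bounded). -/
def mulCLM (f : 𝕋 → ℂ) : L2 →L[ℂ] L2 :=
  if hf : MemLp f ⊤ μT then
    LinearMap.mkContinuousOfExistsBound
      { toFun := fun h => (memMul hf h).toLp (fun x => f x * h x)
        map_add' := fun h k => by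
          rw [← MemLp.toLp_add]
          apply MemLp.toLp_congr
          filter_upwards [AEEqFun.coeFn_add (h : 𝕋 →ₘ[μT] ℂ) (k : 𝕋 →ₘ[μT] ℂ)] with x hx
          simp only [show ((h + k : L2) : 𝕋 →ₘ[μT] ℂ) = (h : 𝕋 →ₘ[μT] ℂ) + (k : 𝕋 →ₘ[μT] ℂ)
            from rfl, hx, Pi.add_apply]
          ring
        map_smul' := fun c h => by
          simp only [RingHom.id_apply]
          rw [← MemLp.toLp_const_smul]
          apply MemLp.toLp_congr
          filter_upwards [AEEqFun.coeFn_smul c (h : 𝕋 →ₘ[μT] ℂ)] with x hx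
          simp only [show ((c • h : L2) : 𝕋 →ₘ[μT] ℂ) = c • (h : 𝕋 →ₘ[μT] ℂ) from rfl, hx,
            Pi.smul_apply, smul_eq_mul]
          ring }
      ⟨(eLpNorm f ⊤ μT).toReal, fun h => by
        simp only [LinearMap.coe_mk, AddHom.coe_mk]
        rw [Lp.norm_toLp, Lp.norm_def]
        rw [← ENNReal.toReal_mul]
        refine ENNReal.toReal_mono ?_ ?_
        · exact ENNReal.mul_ne_top hf.2.ne (Lp.memLp h).2.ne
        · have key := eLpNorm_le_eLpNorm_top_mul_eLpNorm 2 f (Lp.aestronglyMeasurable h)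
            (· * ·) 1 (Filter.Eventually.of_forall fun x => by simp [nnnorm_mul])
          rw [ENNReal.coe_one, one_mul] at key
          exact key⟩
  else 0

theorem continuous_cw : Continuous cw := map_continuous (fourier 1)

theorem norm_cw (x : 𝕋) : ‖cw x‖ = 1 := by
  rw [cw, fourier_apply]
  exact Circle.norm_coe _

theorem memVop (h : L2) : MemLp (fun x => conj (cw x) * conj (h x)) 2 μT := by
  refine MemLp.of_le_mul (c := 1) (Lp.memLp h)
    ((continuous_cw.star.aestronglyMeasurable).mul
      (continuous_star.comp_aestronglyMeasurable (Lp.aestronglyMeasurable h)))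
    (Filter.Eventually.of_forall fun x => ?_)
  simp [norm_cw x]

/-- The antiunitary operator `V` on `L²(∂D)` given by `(V h)(w) = conj(w) ⬝ conj(h(w))`. -/
def Vop (h : L2) : L2 := (memVop h).toLp _

/-- The Toeplitz operator `T_f h = P (f h)` on `H²`. -/
def Toeplitz (f : 𝕋 → ℂ) : Hardy →L[ℂ] Hardy :=
  (Submodule.orthogonalProjectionOnto Hardy).comp ((mulCLM f).comp Hardy.subtypeL)

/-- The Hankel operator `H_f h = (I − P)(f h)`, from `H²` into `L²` (with range in `L² ⊖ H²`). -/
def Hankel (f : 𝕋 → ℂ) : Hardy →L[ℂ] L2 :=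
  (ContinuousLinearMap.id ℂ L2 - Pfull).comp ((mulCLM f).comp Hardy.subtypeL)

/-- The Möbius map `φ_z`, viewed as a function on the circle. -/
def phiC (z : ℂ) : 𝕋 → ℂ := fun x => (z - cw x) / (1 - conj z * cw x)

/-- The normalized reproducing kernel `k_z` as a function on the circle. -/
def kfun (z : ℂ) : 𝕋 → ℂ := fun x => (Real.sqrt (1 - ‖z‖ ^ 2) : ℂ) / (1 - conj z * cw x)

/-- The normalized reproducing kernel `k_z` as an element of `L²`. -/
def kz (z : ℂ) : L2 := symbolL2 (kfun z)

/-- The normalized reproducing kernel `k_z` as an element of the Hardy space `H²`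
(for `|z| < 1`, `k_z` lies in `H²`, so this is just `k_z`). -/
def kzH (z : ℂ) : Hardy := Submodule.orthogonalProjectionOnto Hardy (kz z)

/-- The antianalytic part `f₋ = (I − P) f` of a bounded symbol, as a function. -/
def minusPart (f : 𝕋 → ℂ) : 𝕋 → ℂ := (symbolL2 f - Pfull (symbolL2 f) : L2)

/-- The harmonic (Poisson) extension of `h ∈ L¹(∂D)` at `z ∈ D`:
`h(z) = ∫ h(w) (1 − |z|²)/|1 − w z̄|² dσ(w)`. -/
def poisson (h : 𝕋 → ℂ) (z : ℂ) : ℂ :=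
  ∫ x, h x * (((1 - ‖z‖ ^ 2) / ‖1 - cw x * conj z‖ ^ 2 : ℝ) : ℂ) ∂μT

/-- The Poisson extension of a real-valued function. -/
def poissonR (h : 𝕋 → ℝ) (z : ℂ) : ℝ :=
  ∫ x, h x * ((1 - ‖z‖ ^ 2) / ‖1 - cw x * conj z‖ ^ 2) ∂μT

open Classical in
/-- The Möbius map `φ_z` viewed as a self-map of the circle `∂D` (for `|z| < 1`,
`φ_z` maps the circle to itself). -/
def phiT (z : ℂ) : 𝕋 → 𝕋 := fun x =>
  if h : ‖phiC z x‖ = 1 then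
    AddCircle.homeomorphCircle'.symm ⟨phiC z x, mem_sphere_zero_iff_norm.2 h⟩
  else x

/-- `H²(ℂⁿ) = H² ⊕ ⋯ ⊕ H²`. -/
abbrev HardyN (n : ℕ) := PiLp 2 (fun _ : Fin n => Hardy)
/-- `L²(ℂⁿ) = L² ⊕ ⋯ ⊕ L²`. -/
abbrev L2N (n : ℕ) := PiLp 2 (fun _ : Fin n => L2)

instance {n : ℕ} : CompleteSpace (HardyN n) :=
  inferInstance
instance {n : ℕ} : CompleteSpace (L2N n) :=
  inferInstance

/-- The operator `(Fin n × Fin n)`-matrix of operators acting on direct sums. -/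
def matrixCLM {n : ℕ} {A B : Type*} [NormedAddCommGroup A] [NormedAddCommGroup B]
    [NormedSpace ℂ A] [NormedSpace ℂ B] (T : Fin n → Fin n → (A →L[ℂ] B)) :
    (PiLp 2 fun _ : Fin n => A) →L[ℂ] (PiLp 2 fun _ : Fin n => B) :=
  ((PiLp.continuousLinearEquiv 2 ℂ (fun _ : Fin n => B)).symm.toContinuousLinearMap.comp
    (ContinuousLinearMap.pi fun i => ∑ j, (T i j).comp (ContinuousLinearMap.proj j))).comp
    (PiLp.continuousLinearEquiv 2 ℂ (fun _ : Fin n => A)).toContinuousLinearMap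

/-- The block Toeplitz operator `T_F` on `H²(ℂⁿ)`, given by the operator matrix `(T_{f_ij})`. -/
def blockToeplitz {n : ℕ} (F : Fin n → Fin n → 𝕋 → ℂ) : HardyN n →L[ℂ] HardyN n :=
  matrixCLM fun i j => Toeplitz (F i j)

/-- The block Hankel operator `H_F` from `H²(ℂⁿ)` to `L²(ℂⁿ)`, given by the
operator matrix `(H_{f_ij})`. -/
def blockHankel {n : ℕ} (F : Fin n → Fin n → 𝕋 → ℂ) : HardyN n →L[ℂ] L2N n :=
  matrixCLM fun i j => Hankel (F i j)

/-- Pointwise product of matrix symbols. -/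
def symMul {n : ℕ} (F G : Fin n → Fin n → 𝕋 → ℂ) : Fin n → Fin n → 𝕋 → ℂ :=
  fun i j x => ∑ k, F i k x * G k j x

/-- Pointwise conjugate transpose `F*` of a matrix symbol. -/
def symStar {n : ℕ} (F : Fin n → Fin n → 𝕋 → ℂ) : Fin n → Fin n → 𝕋 → ℂ :=
  fun i j x => conj (F j i x)

/-- The rank-one operator `x ⊗ y` given by `(x ⊗ y) f = ⟨f, y⟩ x`, where the inner
product `⟨·,·⟩` is linear in the first argument. -/
def rankOne {E F : Type*} [NormedAddCommGroup E] [InnerProductSpace ℂ E]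
    [NormedAddCommGroup F] [InnerProductSpace ℂ F] (x : F) (y : E) : E →L[ℂ] F :=
  (innerSL ℂ y).smulRight x

/-! ### Auxiliary lemmas for the main theorem -/

/-- Shorthand for the Fourier basis elements of `L²`. -/
def eL (l : ℤ) : L2 := fourierLp 2 l

lemma eL_ae (l : ℤ) : (eL l : 𝕋 → ℂ) =ᵐ[μT] fun x => fourier l x :=
  coeFn_fourierLp 2 l

lemma inner_L2_eq_integral (x y : L2) :
    ⟪x, y⟫_ℂ = ∫ t, conj (x t) * y t ∂μT := by
  rw [MeasureTheory.L2.inner_def]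
  simp only [RCLike.inner_apply]
  exact integral_congr_ae (Filter.Eventually.of_forall fun t => mul_comm _ _)

lemma eL_mem_Hardy (m : ℕ) : eL (m : ℤ) ∈ Hardy :=
  Submodule.le_topologicalClosure _
    (Submodule.subset_span ⟨m, rfl⟩)

/-- The canonical `m`-th basis vector of `H²`. -/
def εH (m : ℕ) : Hardy := ⟨eL (m : ℤ), eL_mem_Hardy m⟩

lemma mem_orthogonal_Hardy_of_inner_gen {v : L2}
    (hv : ∀ m : ℕ, ⟪v, eL (m : ℤ)⟫_ℂ = 0) : v ∈ Hardyᗮ := by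
  rw [Submodule.mem_orthogonal']
  intro u hu
  have : Hardy ≤ LinearMap.ker (innerSL ℂ v : L2 →ₗ[ℂ] ℂ) := by
    apply Submodule.topologicalClosure_minimal
    · rw [Submodule.span_le]
      rintro _ ⟨m, rfl⟩
      simpa [eL] using hv m
    · exact ContinuousLinearMap.isClosed_ker (innerSL ℂ v)
  simpa using this hu

lemma eL_neg_mem_orthogonal (l : ℤ) (hl : l < 0) : eL l ∈ Hardyᗮ := by
  apply mem_orthogonal_Hardy_of_inner_gen
  intro m
  exact orthonormal_fourier.2 (by omega)

lemma mem_Hardy_of_coeff {x : L2}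
    (h : ∀ l : ℤ, l < 0 → ⟪eL l, x⟫_ℂ = 0) : x ∈ Hardy := by
  have hsum := (fourierBasis (T := 2 * Real.pi)).hasSum_repr x
  refine (Submodule.isClosed_topologicalClosure _).mem_of_tendsto hsum
    (Filter.Eventually.of_forall fun s => ?_)
  refine Submodule.sum_mem _ fun l _ => ?_
  rcases lt_or_ge l 0 with hl | hl
  · have : fourierBasis.repr x l = 0 := by
      rw [fourierBasis.repr_apply_apply, coe_fourierBasis]
      exact h l hl
    simp [this]
  · refine Submodule.smul_mem _ _ ?_
    have : (l.toNat : ℤ) = l := Int.toNat_of_nonneg hl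
    rw [coe_fourierBasis, ← this]
    exact eL_mem_Hardy l.toNat

lemma memℒp_cw : MemLp cw ⊤ μT :=
  memLp_top_of_bound continuous_cw.aestronglyMeasurable 1
    (Filter.Eventually.of_forall fun x => le_of_eq (norm_cw x))

lemma mulCLM_ae {φ : 𝕋 → ℂ} (hφ : MemLp φ ⊤ μT) (x : L2) :
    (mulCLM φ x : 𝕋 → ℂ) =ᵐ[μT] fun t => φ t * x t := by
  rw [mulCLM, dif_pos hφ, LinearMap.mkContinuousOfExistsBound_apply]
  simp only [LinearMap.coe_mk, AddHom.coe_mk]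
  exact MemLp.coeFn_toLp (memMul hφ x)

lemma Pfull_mem (x : L2) : Pfull x ∈ Hardy := (Submodule.orthogonalProjectionOnto Hardy x).2

lemma sub_Pfull_mem_orthogonal (x : L2) : x - Pfull x ∈ Hardyᗮ :=
  Hardy.sub_starProjection_mem_orthogonal x

lemma Pfull_of_mem {x : L2} (hx : x ∈ Hardy) : Pfull x = x := by
  have : (Submodule.orthogonalProjectionOnto Hardy x : L2) = x :=
    Hardy.starProjection_eq_self_iff.2 hx
  simpa [Pfull] using this

lemma hankel_apply {φ : 𝕋 → ℂ} (u : Hardy) :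
    Hankel φ u = mulCLM φ (u : L2) - Pfull (mulCLM φ (u : L2)) := rfl

lemma hankel_mem_orthogonal {φ : 𝕋 → ℂ} (u : Hardy) :
    Hankel φ u ∈ Hardyᗮ := by
  rw [hankel_apply]; exact sub_Pfull_mem_orthogonal _

lemma mulCLM_cw_eL (l : ℤ) : mulCLM cw (eL l) = eL (l + 1) := by
  apply Lp.ext
  filter_upwards [mulCLM_ae memℒp_cw (eL l), eL_ae l, eL_ae (l + 1)] with t h1 h2 h3
  rw [h1, h2, h3, cw, add_comm l 1, fourier_add]

lemma mulCLM_cw_mem_Hardy {x : L2} (hx : x ∈ Hardy) : mulCLM cw x ∈ Hardy := by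
  have hcl : IsClosed ((Submodule.comap (mulCLM cw : L2 →ₗ[ℂ] L2) Hardy : Submodule ℂ L2)
      : Set L2) := (Submodule.isClosed_topologicalClosure _).preimage (mulCLM cw).continuous
  have : Hardy ≤ Submodule.comap (mulCLM cw : L2 →ₗ[ℂ] L2) Hardy := by
    refine Submodule.topologicalClosure_minimal _ ?_ hcl
    rw [Submodule.span_le]
    rintro _ ⟨m, rfl⟩
    have : mulCLM cw (eL (m : ℤ)) = eL ((m : ℤ) + 1) := mulCLM_cw_eL m
    simp only [Submodule.mem_comap, ContinuousLinearMap.coe_coe, SetLike.mem_coe]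
    show mulCLM cw (eL (m : ℤ)) ∈ Hardy
    rw [this]
    have h2 : ((m : ℤ) + 1) = ((m + 1 : ℕ) : ℤ) := by push_cast; ring
    rw [h2]; exact eL_mem_Hardy (m + 1)
  exact this hx

/-- Multiplication by `cw` preserves the `L²` inner product. -/
lemma inner_mulCLM_cw (x y : L2) : ⟪mulCLM cw x, mulCLM cw y⟫_ℂ = ⟪x, y⟫_ℂ := by
  rw [inner_L2_eq_integral, inner_L2_eq_integral]
  apply integral_congr_ae
  filter_upwards [mulCLM_ae memℒp_cw x, mulCLM_ae memℒp_cw y] with t h1 h2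
  have hcw : conj (cw t) * cw t = 1 := by
    rw [cw, ← fourier_neg, ← fourier_add]
    norm_num
  rw [h1, h2, map_mul, mul_mul_mul_comm, hcw, one_mul]

lemma inner_mulCLM_cw_eL (x : L2) (l : ℤ) :
    ⟪mulCLM cw x, eL l⟫_ℂ = ⟪x, eL (l - 1)⟫_ℂ := by
  rw [inner_L2_eq_integral, inner_L2_eq_integral]
  apply integral_congr_ae
  filter_upwards [mulCLM_ae memℒp_cw x, eL_ae l, eL_ae (l - 1)] with t h1 h2 h3
  rw [h1, h2, h3]
  have : fourier (l - 1) t = conj (cw t) * fourier l t := by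
    rw [cw, ← fourier_neg, ← fourier_add, show (-1 + l) = l - 1 by ring]
  rw [this, map_mul]
  ring

lemma inner_eL_mulCLM_cw (x : L2) (l : ℤ) :
    ⟪eL l, mulCLM cw x⟫_ℂ = ⟪eL (l - 1), x⟫_ℂ := by
  rw [← inner_conj_symm, inner_mulCLM_cw_eL, inner_conj_symm]

lemma inner_eL_self : ⟪eL 0, eL 0⟫_ℂ = 1 := by
  have := orthonormal_fourier (T := 2 * Real.pi).1 0
  rw [← coe_fourierBasis] at this
  rw [inner_self_eq_norm_sq_to_K]
  rw [coe_fourierBasis] at this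
  show ((‖eL 0‖ : ℂ) ^ 2 = 1)
  rw [show ‖eL 0‖ = 1 from this]
  norm_num

/-- For `a ⟂ H²`, the projection of `cw·a` onto `H²` is `⟪e₋₁, a⟫ • e₀`. -/
lemma Pfull_mulCLM_cw_orthogonal {a : L2} (ha : a ∈ Hardyᗮ) :
    Pfull (mulCLM cw a) = ⟪eL (-1), a⟫_ℂ • eL 0 := by
  have key : (Submodule.orthogonalProjectionOnto Hardy (mulCLM cw a) : L2) = ⟪eL (-1), a⟫_ℂ • eL 0 := by
    apply Hardy.eq_starProjection_of_mem_orthogonal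
    · exact Submodule.smul_mem _ _ (eL_mem_Hardy 0)
    · apply mem_orthogonal_Hardy_of_inner_gen
      intro m
      rw [inner_sub_left, inner_smul_left, inner_mulCLM_cw_eL]
      rcases Nat.eq_zero_or_pos m with hm | hm
      · subst hm
        rw [show ((0 : ℕ) : ℤ) - 1 = -1 by norm_num]
        push_cast
        rw [inner_eL_self, ← inner_conj_symm a (eL (-1))]
        ring
      · have h1 : ⟪a, eL ((m : ℤ) - 1)⟫_ℂ = 0 := by
          apply (Submodule.mem_orthogonal' _ _).1 ha
          have : ((m : ℤ) - 1) = ((m - 1 : ℕ) : ℤ) := by omega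
          rw [this]; exact eL_mem_Hardy (m - 1)
        have h2 : ⟪eL (0 : ℤ), eL (m : ℤ)⟫_ℂ = 0 :=
          orthonormal_fourier.2 (by omega)
        rw [h1, h2]
        ring
  simpa [Pfull] using key

/-- `z·u ∈ H²` for `u ∈ H²`. -/
def cwH (u : Hardy) : Hardy := ⟨mulCLM cw (u : L2), mulCLM_cw_mem_Hardy u.2⟩

/-- The key intertwining identity: `H_φ(z u) = (I − P)(z ⬝ H_φ u)`. -/
lemma hankel_cwH {φ : 𝕋 → ℂ} (hφ : MemLp φ ⊤ μT) (u : Hardy) :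
    Hankel φ (cwH u) =
      mulCLM cw (Hankel φ u) - Pfull (mulCLM cw (Hankel φ u)) := by
  have hcomm : mulCLM φ (mulCLM cw (u : L2)) = mulCLM cw (mulCLM φ (u : L2)) := by
    apply Lp.ext
    filter_upwards [mulCLM_ae hφ (mulCLM cw (u : L2)), mulCLM_ae memℒp_cw (u : L2),
      mulCLM_ae memℒp_cw (mulCLM φ (u : L2)), mulCLM_ae hφ (u : L2)] with t h1 h2 h3 h4
    rw [h1, h2, h3, h4]; ring
  have hsplit : mulCLM φ (u : L2) = Hankel φ u + Pfull (mulCLM φ (u : L2)) := by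
    rw [hankel_apply]; abel
  have hP : Pfull (mulCLM cw (Pfull (mulCLM φ (u : L2)))) =
      mulCLM cw (Pfull (mulCLM φ (u : L2))) :=
    Pfull_of_mem (mulCLM_cw_mem_Hardy (Pfull_mem _))
  rw [hankel_apply, show ((cwH u : Hardy) : L2) = mulCLM cw (u : L2) from rfl, hcomm]
  rw [hsplit, map_add, map_add, hP]
  abel

lemma sum_inner_hankel_eq_zero {n : ℕ} (f g : Fin n → 𝕋 → ℂ)
    (h : ∑ i, (Hankel (f i)).adjoint.comp (Hankel (g i)) = 0) (u v : Hardy) :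
    ∑ i, ⟪Hankel (g i) u, Hankel (f i) v⟫_ℂ = 0 := by
  have h0 : ((∑ i, (Hankel (f i)).adjoint.comp (Hankel (g i))) u) = 0 := by rw [h]; rfl
  have h1 : ⟪(∑ i, (Hankel (f i)).adjoint.comp (Hankel (g i))) u, v⟫_ℂ = 0 := by
    rw [h0]; exact inner_zero_left v
  rw [ContinuousLinearMap.sum_apply, sum_inner] at h1
  simp only [ContinuousLinearMap.comp_apply, ContinuousLinearMap.adjoint_inner_left] at h1
  exact h1

lemma inner_hankel_cwH {φ ψ : 𝕋 → ℂ} (hφ : MemLp φ ⊤ μT) (hψ : MemLp ψ ⊤ μT) (u v : Hardy) :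
    ⟪Hankel ψ (cwH u), Hankel φ (cwH v)⟫_ℂ
      = ⟪Hankel ψ u, Hankel φ v⟫_ℂ
        - conj ⟪eL (-1), Hankel ψ u⟫_ℂ * ⟪eL (-1), Hankel φ v⟫_ℂ := by
  have ha : Hankel ψ u ∈ Hardyᗮ := hankel_mem_orthogonal u
  have hb : Hankel φ v ∈ Hardyᗮ := hankel_mem_orthogonal v
  have e1 : ⟪mulCLM cw (Hankel ψ u), mulCLM cw (Hankel φ v)⟫_ℂ
      = ⟪Hankel ψ u, Hankel φ v⟫_ℂ := inner_mulCLM_cw _ _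
  have e2 : ⟪mulCLM cw (Hankel ψ u), eL 0⟫_ℂ = conj (⟪eL (-1), Hankel ψ u⟫_ℂ) := by
    rw [inner_mulCLM_cw_eL, show (0 : ℤ) - 1 = -1 by ring, ← inner_conj_symm]
  have e3 : ⟪eL 0, mulCLM cw (Hankel φ v)⟫_ℂ = ⟪eL (-1), Hankel φ v⟫_ℂ := by
    rw [inner_eL_mulCLM_cw, show (0 : ℤ) - 1 = -1 by ring]
  rw [hankel_cwH hψ u, hankel_cwH hφ v, Pfull_mulCLM_cw_orthogonal ha,
    Pfull_mulCLM_cw_orthogonal hb]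
  rw [inner_sub_left, inner_sub_right, inner_sub_right, inner_smul_left, inner_smul_left,
    inner_smul_right, inner_smul_right, e1, e2, e3, inner_eL_self]
  ring

lemma key_relation {n : ℕ} (f g : Fin n → 𝕋 → ℂ)
    (hf : ∀ i, MemLp (f i) ⊤ μT) (hg : ∀ i, MemLp (g i) ⊤ μT)
    (h : ∑ i, (Hankel (f i)).adjoint.comp (Hankel (g i)) = 0) (u v : Hardy) :
    ∑ i, conj ⟪eL (-1), Hankel (g i) u⟫_ℂ * ⟪eL (-1), Hankel (f i) v⟫_ℂ = 0 := by
  have h1 := sum_inner_hankel_eq_zero f g h u v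
  have h2 := sum_inner_hankel_eq_zero f g h (cwH u) (cwH v)
  calc ∑ i, conj ⟪eL (-1), Hankel (g i) u⟫_ℂ * ⟪eL (-1), Hankel (f i) v⟫_ℂ
      = ∑ i, (⟪Hankel (g i) u, Hankel (f i) v⟫_ℂ
          - ⟪Hankel (g i) (cwH u), Hankel (f i) (cwH v)⟫_ℂ) := by
        refine Finset.sum_congr rfl fun i _ => ?_
        rw [inner_hankel_cwH (hf i) (hg i)]
        ring
    _ = 0 := by rw [Finset.sum_sub_distrib, h1, h2, sub_zero]

lemma symbolL2_ae {φ : 𝕋 → ℂ} (hφ : MemLp φ ⊤ μT) :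
    (symbolL2 φ : 𝕋 → ℂ) =ᵐ[μT] φ := by
  rw [symbolL2, dif_pos hφ]
  exact MemLp.coeFn_toLp _

lemma inner_eL_hankel {φ : 𝕋 → ℂ} (hφ : MemLp φ ⊤ μT) (m : ℕ) :
    ⟪eL (-1), Hankel φ (εH m)⟫_ℂ = ⟪eL (-(m : ℤ) - 1), symbolL2 φ⟫_ℂ := by
  have horth : ⟪eL (-1), Pfull (mulCLM φ (eL (m : ℤ)))⟫_ℂ = 0 :=
    Submodule.inner_left_of_mem_orthogonal (Pfull_mem _)
      (eL_neg_mem_orthogonal (-1) (by norm_num))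
  rw [hankel_apply, inner_sub_right,
    show ((εH m : Hardy) : L2) = eL (m : ℤ) from rfl, horth, sub_zero]
  rw [inner_L2_eq_integral, inner_L2_eq_integral]
  apply integral_congr_ae
  filter_upwards [eL_ae (-1), mulCLM_ae hφ (eL (m : ℤ)), eL_ae (m : ℤ),
    eL_ae (-(m : ℤ) - 1), symbolL2_ae hφ] with t h1 h2 h3 h4 h5
  rw [h1, h2, h3, h4, h5]
  have hA : conj (fourier (-1 : ℤ) t) = fourier (1 : ℤ) t := by
    rw [← fourier_neg, neg_neg]
  have hB : conj (fourier (-(m : ℤ) - 1) t) = fourier ((m : ℤ) + 1) t := by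
    rw [← fourier_neg, show -(-(m : ℤ) - 1) = (m : ℤ) + 1 by ring]
  have hC : fourier ((m : ℤ) + 1) t = fourier (m : ℤ) t * fourier (1 : ℤ) t := fourier_add
  rw [hA, hB, hC]
  ring

lemma integrable_conj_mul (x y : L2) :
    Integrable (fun t => conj (x t) * y t) μT := by
  have := MeasureTheory.L2.integrable_inner (𝕜 := ℂ) x y
  simpa only [RCLike.inner_apply, mul_comm] using this

lemma inner_eL_symbol_sum {n : ℕ} (c : Fin n → ℂ) (φ : Fin n → 𝕋 → ℂ)
    (hφ : ∀ i, MemLp (φ i) ⊤ μT) (l : ℤ) :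
    ⟪eL l, symbolL2 (fun x => ∑ i, c i * φ i x)⟫_ℂ
      = ∑ i, c i * ⟪eL l, symbolL2 (φ i)⟫_ℂ := by
  have hmem : MemLp (fun x => ∑ i, c i * φ i x) ⊤ μT :=
    memLp_finset_sum Finset.univ (fun i _ => (hφ i).const_mul (c i))
  rw [inner_L2_eq_integral]
  simp_rw [inner_L2_eq_integral]
  have hint : ∀ i : Fin n, Integrable
      (fun t => c i * (conj ((eL l : 𝕋 → ℂ) t) * (symbolL2 (φ i) : 𝕋 → ℂ) t)) μT :=
    fun i => (integrable_conj_mul (eL l) (symbolL2 (φ i))).const_mul (c i)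
  calc ∫ t, conj ((eL l : 𝕋 → ℂ) t) * (symbolL2 (fun x => ∑ i, c i * φ i x) : 𝕋 → ℂ) t ∂μT
      = ∫ t, ∑ i, c i * (conj ((eL l : 𝕋 → ℂ) t) * (symbolL2 (φ i) : 𝕋 → ℂ) t) ∂μT := by
        apply integral_congr_ae
        have hae : ∀ᵐ t ∂μT, ∀ i : Fin n, (symbolL2 (φ i) : 𝕋 → ℂ) t = φ i t :=
          MeasureTheory.ae_all_iff.2 fun i => symbolL2_ae (hφ i)
        filter_upwards [symbolL2_ae hmem, hae] with t h1 h2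
        rw [h1, Finset.mul_sum]
        exact Finset.sum_congr rfl fun i _ => by rw [h2 i]; ring
    _ = ∑ i, ∫ t, c i * (conj ((eL l : 𝕋 → ℂ) t) * (symbolL2 (φ i) : 𝕋 → ℂ) t) ∂μT :=
        integral_finset_sum _ fun i _ => hint i
    _ = ∑ i, c i * ∫ t, conj ((eL l : 𝕋 → ℂ) t) * (symbolL2 (φ i) : 𝕋 → ℂ) t ∂μT := by
        exact Finset.sum_congr rfl fun i _ => integral_const_mul _ _

lemma mem_orthogonal_span {V : Type*} [NormedAddCommGroup V] [InnerProductSpace ℂ V]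
    (s : Set V) (v : V) (hv : ∀ u ∈ s, ⟪u, v⟫_ℂ = 0) : v ∈ (Submodule.span ℂ s)ᗮ := by
  rw [Submodule.mem_orthogonal]
  intro u hu
  induction hu using Submodule.span_induction with
  | mem x hx => exact hv x hx
  | zero => exact inner_zero_left v
  | add x y _ _ hx hy => rw [inner_add_left, hx, hy, add_zero]
  | smul c x _ hx => rw [inner_smul_left, hx, mul_zero]

lemma euclidean_eq_sum_single {n : ℕ} (x : EuclideanSpace ℂ (Fin n)) :
    x = ∑ i, x i • EuclideanSpace.single i (1 : ℂ) := by
  ext j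
  rw [WithLp.ofLp_sum, Finset.sum_apply]
  simp [EuclideanSpace.single_apply]

lemma inHinf_sum {n : ℕ} (c : Fin n → ℂ) (φ : Fin n → 𝕋 → ℂ)
    (hφ : ∀ i, MemLp (φ i) ⊤ μT)
    (hc : ∀ m : ℕ, ∑ i, c i * ⟪eL (-1), Hankel (φ i) (εH m)⟫_ℂ = 0) :
    InHinf fun x => ∑ i, c i * φ i x := by
  refine ⟨memLp_finset_sum Finset.univ (fun i _ => (hφ i).const_mul (c i)), ?_⟩
  apply mem_Hardy_of_coeff
  intro l hl
  have hm : l = -(((-l - 1).toNat : ℕ) : ℤ) - 1 := by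
    rw [Int.toNat_of_nonneg (by omega)]; ring
  rw [hm, inner_eL_symbol_sum c φ hφ]
  have hsum : ∑ i, c i * ⟪eL (-(((-l - 1).toNat : ℕ) : ℤ) - 1), symbolL2 (φ i)⟫_ℂ
      = ∑ i, c i * ⟪eL (-1), Hankel (φ i) (εH ((-l - 1).toNat))⟫_ℂ :=
    Finset.sum_congr rfl fun i _ => by rw [inner_eL_hankel (hφ i)]
  rw [hsum]
  exact hc _

section ProjMatrix

variable {n : ℕ} (E : Submodule ℂ (EuclideanSpace ℂ (Fin n)))

lemma projMatrix_entry (i j : Fin n) :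
    (Submodule.orthogonalProjectionOnto E (EuclideanSpace.single j 1) : EuclideanSpace ℂ (Fin n)) i
      = ⟪EuclideanSpace.single i (1 : ℂ),
          (Submodule.orthogonalProjectionOnto E (EuclideanSpace.single j 1) : EuclideanSpace ℂ (Fin n))⟫_ℂ := by
  rw [EuclideanSpace.inner_single_left, map_one, one_mul]

lemma projMatrix_abs_le_one (i j : Fin n) :
    ‖(Submodule.orthogonalProjectionOnto E (EuclideanSpace.single j 1) :
      EuclideanSpace ℂ (Fin n)) i‖ ≤ 1 := by
  rw [projMatrix_entry]
  calc ‖⟪EuclideanSpace.single i (1 : ℂ),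
        (Submodule.orthogonalProjectionOnto E (EuclideanSpace.single j 1) : EuclideanSpace ℂ (Fin n))⟫_ℂ‖
      ≤ ‖EuclideanSpace.single i (1 : ℂ)‖ *
        ‖(Submodule.orthogonalProjectionOnto E (EuclideanSpace.single j 1) : EuclideanSpace ℂ (Fin n))‖ :=
        norm_inner_le_norm _ _
    _ ≤ 1 := by
        have h1 : ‖EuclideanSpace.single i (1 : ℂ)‖ = 1 := by
          rw [EuclideanSpace.norm_single]; norm_num
        have h3 : ‖EuclideanSpace.single j (1 : ℂ)‖ = 1 := by
          rw [EuclideanSpace.norm_single]; norm_num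
        have h2 : ‖(Submodule.orthogonalProjectionOnto E (EuclideanSpace.single j 1) :
            EuclideanSpace ℂ (Fin n))‖ ≤ 1 := by
          have hb := (Submodule.orthogonalProjectionOnto E).le_opNorm (EuclideanSpace.single j (1 : ℂ))
          have hn := E.orthogonalProjectionOnto_norm_le
          calc ‖(Submodule.orthogonalProjectionOnto E (EuclideanSpace.single j 1) :
              EuclideanSpace ℂ (Fin n))‖
              = ‖Submodule.orthogonalProjectionOnto E (EuclideanSpace.single j (1 : ℂ))‖ := rfl
            _ ≤ ‖Submodule.orthogonalProjectionOnto E‖ * ‖EuclideanSpace.single j (1 : ℂ)‖ := hb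
            _ ≤ 1 * 1 := by
                rw [h3]
                exact mul_le_mul_of_nonneg_right hn (by norm_num)
            _ = 1 := by norm_num
        rw [h1, one_mul]
        exact h2

lemma projMatrix_herm (i j : Fin n) :
    conj ((Submodule.orthogonalProjectionOnto E (EuclideanSpace.single j 1) : EuclideanSpace ℂ (Fin n)) i)
      = (Submodule.orthogonalProjectionOnto E (EuclideanSpace.single i 1) : EuclideanSpace ℂ (Fin n)) j := by
  rw [projMatrix_entry E i j, inner_conj_symm]
  exact (E.inner_starProjection_left_eq_right _ _).trans (projMatrix_entry E j i).symm

lemma projMatrix_apply (x : EuclideanSpace ℂ (Fin n)) (j : Fin n) :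
    ∑ i, (Submodule.orthogonalProjectionOnto E (EuclideanSpace.single i 1) :
        EuclideanSpace ℂ (Fin n)) j * x i
      = (Submodule.orthogonalProjectionOnto E x : EuclideanSpace ℂ (Fin n)) j := by
  conv_rhs => rw [euclidean_eq_sum_single x]
  rw [map_sum, AddSubmonoidClass.coe_finset_sum, WithLp.ofLp_sum, Finset.sum_apply]
  refine Finset.sum_congr rfl fun i _ => ?_
  rw [_root_.map_smul, SetLike.val_smul, PiLp.smul_apply, smul_eq_mul]
  ring

end ProjMatrix


open Matrix in
/-- If `∑ i, H_{f_i}* H_{g_i} = 0` then there are `A ∈ (M_{n×n})₁` and a permutation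
matrix `R` with all entries of `(R − A) f` and of `A* g` in `H^∞`. -/
theorem exists_matrix_perm_of_sum_hankel_eq_zero (n : ℕ) (f g : Fin n → 𝕋 → ℂ)
    (hf : ∀ i, MemLp (f i) ⊤ μT) (hg : ∀ i, MemLp (g i) ⊤ μT)
    (h : ∑ i, (Hankel (f i)).adjoint.comp (Hankel (g i)) = 0) :
    ∃ (A : Matrix (Fin n) (Fin n) ℂ) (σ : Equiv.Perm (Fin n)),
      (∀ i j, ‖A i j‖ ≤ 1) ∧
      (∀ j, InHinf fun x => ∑ i, ((σ.permMatrix ℂ - A) j i) * f i x) ∧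
      (∀ j, InHinf fun x => ∑ i, (Aᴴ j i) * g i x) := by
  classical
  -- the vectors of negative Fourier coefficients
  set F : ℕ → EuclideanSpace ℂ (Fin n) :=
    fun m => WithLp.toLp 2 (fun i => ⟪eL (-1), Hankel (f i) (εH m)⟫_ℂ) with hFdef
  set G : ℕ → EuclideanSpace ℂ (Fin n) :=
    fun k => WithLp.toLp 2 (fun i => ⟪eL (-1), Hankel (g i) (εH k)⟫_ℂ) with hGdef
  have hFi : ∀ m i, F m i = ⟪eL (-1), Hankel (f i) (εH m)⟫_ℂ := fun m i => by rw [hFdef]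
  have hGi : ∀ k i, G k i = ⟪eL (-1), Hankel (g i) (εH k)⟫_ℂ := fun k i => by rw [hGdef]
  have hrel : ∀ k m : ℕ, ∑ i, conj (G k i) * F m i = 0 :=
    fun k m => key_relation f g hf hg h (εH k) (εH m)
  set E : Submodule ℂ (EuclideanSpace ℂ (Fin n)) := Submodule.span ℂ (Set.range F) with hE
  have hGE : ∀ k : ℕ, G k ∈ Eᗮ := by
    intro k
    rw [hE]
    apply mem_orthogonal_span
    rintro u ⟨m, rfl⟩
    rw [PiLp.inner_apply]
    simp only [RCLike.inner_apply]
    rw [show ∑ i, G k i * conj (F m i) = ∑ i, conj (F m i) * G k i from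
      Finset.sum_congr rfl fun i _ => mul_comm _ _]
    calc ∑ i, conj (F m i) * G k i
        = conj (∑ i, conj (G k i) * F m i) := by
          rw [map_sum]
          refine Finset.sum_congr rfl fun i _ => ?_
          rw [_root_.map_mul, Complex.conj_conj]
          ring
      _ = 0 := by rw [hrel k m, map_zero]
  set A : Matrix (Fin n) (Fin n) ℂ :=
    fun i j => (Submodule.orthogonalProjectionOnto E (EuclideanSpace.single j 1) :
      EuclideanSpace ℂ (Fin n)) i with hA
  have hAij : ∀ i j, A i j = (Submodule.orthogonalProjectionOnto E (EuclideanSpace.single j 1) :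
      EuclideanSpace ℂ (Fin n)) i := fun i j => by rw [hA]
  have hperm : ((1 : Equiv.Perm (Fin n)).permMatrix ℂ) = (1 : Matrix (Fin n) (Fin n) ℂ) := by
    show ((Equiv.refl (Fin n)).toPEquiv.toMatrix : Matrix (Fin n) (Fin n) ℂ) = 1
    rw [Equiv.toPEquiv_refl, PEquiv.toMatrix_refl]
  refine ⟨A, 1, fun i j => ?_, fun j => ?_, fun j => ?_⟩
  · rw [hAij]
    exact projMatrix_abs_le_one E i j
  · -- rows of (1 - A) kill the negative coefficients of f
    rw [hperm]
    refine inHinf_sum _ f hf fun m => ?_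
    have hAF : ∑ i, A j i * ⟪eL (-1), Hankel (f i) (εH m)⟫_ℂ
        = (Submodule.orthogonalProjectionOnto E (F m) : EuclideanSpace ℂ (Fin n)) j := by
      exact projMatrix_apply E (F m) j
    have hPF : (Submodule.orthogonalProjectionOnto E (F m) : EuclideanSpace ℂ (Fin n)) = F m :=
      E.starProjection_eq_self_iff.2 (by rw [hE]; exact Submodule.subset_span ⟨m, rfl⟩)
    calc ∑ i, ((1 : Matrix (Fin n) (Fin n) ℂ) - A) j i * ⟪eL (-1), Hankel (f i) (εH m)⟫_ℂ
        = (∑ i, if j = i then ⟪eL (-1), Hankel (f i) (εH m)⟫_ℂ else 0)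
          - ∑ i, A j i * ⟪eL (-1), Hankel (f i) (εH m)⟫_ℂ := by
          rw [← Finset.sum_sub_distrib]
          refine Finset.sum_congr rfl fun i _ => ?_
          rw [Matrix.sub_apply, Matrix.one_apply, sub_mul, ite_mul, one_mul, zero_mul]
      _ = ⟪eL (-1), Hankel (f j) (εH m)⟫_ℂ - F m j := by
          rw [hAF, hPF, Finset.sum_ite_eq]
          simp
      _ = 0 := by rw [hFi]; exact sub_self _
  · -- columns of A (conjugated) kill the negative coefficients of g
    refine inHinf_sum _ g hg fun k => ?_
    have hPG : (Submodule.orthogonalProjectionOnto E (G k)) = 0 :=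
      Submodule.orthogonalProjectionOnto_apply_of_mem_orthogonal (hGE k)
    calc ∑ i, Aᴴ j i * ⟪eL (-1), Hankel (g i) (εH k)⟫_ℂ
        = ∑ i, (Submodule.orthogonalProjectionOnto E (EuclideanSpace.single i 1) :
            EuclideanSpace ℂ (Fin n)) j * G k i := by
          refine Finset.sum_congr rfl fun i _ => ?_
          have h1 : Aᴴ j i = (Submodule.orthogonalProjectionOnto E (EuclideanSpace.single i 1) :
              EuclideanSpace ℂ (Fin n)) j := by
            rw [Matrix.conjTranspose_apply, RCLike.star_def, hAij]
            exact projMatrix_herm E i j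
          rw [h1]
      _ = (Submodule.orthogonalProjectionOnto E (G k) : EuclideanSpace ℂ (Fin n)) j :=
          projMatrix_apply E (G k) j
      _ = 0 := by rw [hPG]; rfl

end HardySpace
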